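/- arXiv:1612.07497 — 4 statements merged into one kernel-verified Lean document; each statement's English description precedes it below -/
import Mathlib

section
/- Let f: ℝ^p → ℝ be convex and differentiable, λ > 0, and let θ̂ minimize f(θ) + λ|θ|₁. Set θ̃ = θ̂ − θ*, z* = |∇f(θ*)|_∞, and D(θ̂, θ*) = (θ̂ − θ*)'(∇f(θ̂) − ∇f(θ*)). If T is any index set containing the support of θ*, then (λ − z*)|θ̃_{T^c}|₁ ≤ D(θ̂, θ*) + (λ − z*)|θ̃_{T^c}|₁ ≤ (λ + z*)|θ̃_T|₁. -/
open Filter Topology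

noncomputable section

lemma lin_sum {p : ℕ} (L : (Fin p → ℝ) →L[ℝ] ℝ) (v : Fin p → ℝ) :
    L v = ∑ j, v j * L (Pi.single j 1) := by
  have hv : v = ∑ j, v j • (Pi.single j 1 : Fin p → ℝ) := by
    funext k
    simp [Finset.sum_apply, Pi.single_apply]
  conv_lhs => rw [hv]
  rw [map_sum]
  simp [smul_eq_mul]

lemma line_deriv {p : ℕ} (f : (Fin p → ℝ) → ℝ) (hdiff : Differentiable ℝ f)
    (x v : Fin p → ℝ) :
    HasDerivAt (fun t : ℝ => f (x + t • v)) (fderiv ℝ f x v) 0 := by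
  have hc : HasDerivAt (fun t : ℝ => x + t • v) v 0 := by
    simpa using ((hasDerivAt_id (0:ℝ)).smul_const v).const_add x
  have := (hdiff (x + (0:ℝ) • v)).hasFDerivAt.comp_hasDerivAt 0 hc
  simpa [Function.comp_def] using this

lemma grad_le {p : ℕ} (f : (Fin p → ℝ) → ℝ)
    (hconv : ConvexOn ℝ Set.univ f) (hdiff : Differentiable ℝ f)
    (x y : Fin p → ℝ) : fderiv ℝ f x (y - x) ≤ f y - f x := by
  have hD := line_deriv f hdiff x (y - x)
  have hslope := hasDerivAt_iff_tendsto_slope.mp hD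
  have h1 : Tendsto (slope (fun t : ℝ => f (x + t • (y - x))) 0) (𝓝[>] 0)
      (𝓝 (fderiv ℝ f x (y - x))) :=
    hslope.mono_left (nhdsWithin_mono _ (fun t ht => ne_of_gt ht))
  refine le_of_tendsto h1 ?_
  filter_upwards [Ioc_mem_nhdsGT_of_mem (Set.left_mem_Ico.2 one_pos)] with t ht
  have ht0 : 0 < t := ht.1
  have ht1 : t ≤ 1 := ht.2
  have hcv := hconv.2 (Set.mem_univ x) (Set.mem_univ y) (by linarith : (0:ℝ) ≤ 1 - t)
      (le_of_lt ht0) (by ring)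
  have hx : x + t • (y - x) = (1 - t) • x + t • y := by
    funext k; simp [Pi.add_apply, Pi.smul_apply, smul_eq_mul]; ring
  rw [slope_def_field, hx, sub_zero, div_le_iff₀ ht0]
  simp only [smul_eq_mul] at hcv
  have h0 : x + (0:ℝ) • (y - x) = x := by simp
  rw [h0]
  nlinarith [hcv]

lemma kkt {p : ℕ} (f : (Fin p → ℝ) → ℝ) (hdiff : Differentiable ℝ f)
    (lam : ℝ) (hlam : 0 < lam) (θhat : Fin p → ℝ)
    (hmin : IsMinOn (fun θ => f θ + lam * ∑ j, |θ j|) Set.univ θhat) (j : Fin p) :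
    |fderiv ℝ f θhat (Pi.single j 1)| ≤ lam ∧
    fderiv ℝ f θhat (Pi.single j 1) * θhat j = -(lam * |θhat j|) := by
  set g := fderiv ℝ f θhat (Pi.single j 1 : Fin p → ℝ) with hg
  set h : ℝ → ℝ := fun t => f (θhat + t • (Pi.single j 1 : Fin p → ℝ)) with hh
  have hd : HasDerivAt h g 0 := line_deriv f hdiff θhat _
  have hslope := hasDerivAt_iff_tendsto_slope.mp hd
  have hsl : ∀ t : ℝ, slope h 0 t = (h t - h 0) / t := by
    intro t; rw [slope_def_field]; ring_nf
  -- key inequality from minimality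
  have key : ∀ t : ℝ, -(lam * (|θhat j + t| - |θhat j|)) ≤ h t - h 0 := by
    intro t
    have hm := hmin (Set.mem_univ (θhat + t • (Pi.single j 1 : Fin p → ℝ)))
    simp only [Set.mem_setOf_eq] at hm
    have hsum : ∑ j', |(θhat + t • (Pi.single j 1 : Fin p → ℝ)) j'|
        = ∑ j', |θhat j'| + (|θhat j + t| - |θhat j|) := by
      have : ∑ j', (|(θhat + t • (Pi.single j 1 : Fin p → ℝ)) j'| - |θhat j'|)
          = |θhat j + t| - |θhat j| := by
        rw [Finset.sum_eq_single j]
        · simp [Pi.single_apply, mul_comm]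
        · intro b _ hb
          simp [Pi.single_apply, hb]
        · simp
      rw [← this, Finset.sum_sub_distrib]; ring
    have h0 : h 0 = f θhat := by simp [hh]
    have hm' : f θhat + lam * ∑ j', |θhat j'| ≤
        h t + lam * (∑ j', |θhat j'| + (|θhat j + t| - |θhat j|)) := by
      rw [← hsum]; exact hm
    rw [h0]; nlinarith [hm']
  have habs : ∀ a t : ℝ, |a + t| - |a| ≤ |t| := by
    intro a t
    have := abs_add_le a t
    linarith
  -- upper bound g ≤ lam
  have hub : g ≤ lam := by
    have h1 : Tendsto (slope h 0) (𝓝[<] 0) (𝓝 g) :=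
      hslope.mono_left (nhdsWithin_mono _ (fun t ht => ne_of_lt ht))
    refine le_of_tendsto h1 ?_
    filter_upwards [self_mem_nhdsWithin] with t ht
    have ht0 : t < 0 := ht
    rw [hsl, div_le_iff_of_neg ht0]
    have h2 : |θhat j + t| - |θhat j| ≤ |t| := habs _ _
    have h3 : |t| = -t := abs_of_neg ht0
    have := key t
    nlinarith
  -- lower bound -lam ≤ g
  have hlb : -lam ≤ g := by
    have h1 : Tendsto (slope h 0) (𝓝[>] 0) (𝓝 g) :=
      hslope.mono_left (nhdsWithin_mono _ (fun t ht => ne_of_gt ht))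
    refine ge_of_tendsto h1 ?_
    filter_upwards [self_mem_nhdsWithin] with t ht
    have ht0 : 0 < t := ht
    rw [hsl, le_div_iff₀ ht0]
    have h2 : |θhat j + t| - |θhat j| ≤ |t| := habs _ _
    have h3 : |t| = t := abs_of_pos ht0
    have := key t
    nlinarith
  refine ⟨abs_le.mpr ⟨hlb, hub⟩, ?_⟩
  rcases lt_trichotomy (θhat j) 0 with hneg | hzero | hpos
  · -- θhat j < 0 : g = lam
    have hge : lam ≤ g := by
      have h1 : Tendsto (slope h 0) (𝓝[>] 0) (𝓝 g) :=
        hslope.mono_left (nhdsWithin_mono _ (fun t ht => ne_of_gt ht))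
      refine ge_of_tendsto h1 ?_
      filter_upwards [Ioo_mem_nhdsGT_of_mem (Set.left_mem_Ico.2 (by linarith : (0:ℝ) < -θhat j))]
        with t ht
      have ht0 : 0 < t := ht.1
      have ht1 : θhat j + t < 0 := by have := ht.2; linarith
      rw [hsl, le_div_iff₀ ht0]
      have h2 : |θhat j + t| = -(θhat j + t) := abs_of_neg ht1
      have h3 : |θhat j| = -θhat j := abs_of_neg hneg
      have := key t
      nlinarith
    have : g = lam := le_antisymm hub hge
    rw [this, abs_of_neg hneg]; ring
  · simp [hzero]
  · -- θhat j > 0 : g = -lam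
    have hle : g ≤ -lam := by
      have h1 : Tendsto (slope h 0) (𝓝[<] 0) (𝓝 g) :=
        hslope.mono_left (nhdsWithin_mono _ (fun t ht => ne_of_lt ht))
      refine le_of_tendsto h1 ?_
      filter_upwards [Ioo_mem_nhdsLT_of_mem (Set.right_mem_Ioc.2 (by linarith : -θhat j < 0))]
        with t ht
      have ht0 : t < 0 := ht.2
      have ht1 : 0 < θhat j + t := by have := ht.1; linarith
      rw [hsl, div_le_iff_of_neg ht0]
      have h2 : |θhat j + t| = θhat j + t := abs_of_pos ht1
      have h3 : |θhat j| = θhat j := abs_of_pos hpos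
      have := key t
      nlinarith
    have : g = -lam := le_antisymm hle (by linarith)
    rw [this, abs_of_pos hpos]; ring

/-- Basic Lasso inequality: if `θ̂` minimizes `f(θ) + λ|θ|₁` for convex differentiable `f`,
`θ̃ = θ̂ − θ*`, `z* = |∇f(θ*)|_∞`, `D = (θ̂−θ*)'(∇f(θ̂)−∇f(θ*))`, and `T` contains the
support of `θ*`, then
`(λ − z*)|θ̃_{T^c}|₁ ≤ D + (λ − z*)|θ̃_{T^c}|₁ ≤ (λ + z*)|θ̃_T|₁`. -/
theorem stmt5 (p : ℕ) (f : (Fin p → ℝ) → ℝ)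
    (hconv : ConvexOn ℝ Set.univ f) (hdiff : Differentiable ℝ f)
    (lam : ℝ) (hlam : 0 < lam)
    (θstar θhat : Fin p → ℝ) (T : Finset (Fin p))
    (hsupp : ∀ j, θstar j ≠ 0 → j ∈ T)
    (hmin : IsMinOn (fun θ => f θ + lam * ∑ j, |θ j|) Set.univ θhat)
    (grad : (Fin p → ℝ) → Fin p → ℝ)
    (hgrad : ∀ x j, grad x j = fderiv ℝ f x (Pi.single j 1 : Fin p → ℝ))
    (θt : Fin p → ℝ) (hθt : θt = fun j => θhat j - θstar j)
    (zstar : ℝ) (hz : zstar = ⨆ j, |grad θstar j|)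
    (D : ℝ) (hD : D = ∑ j, θt j * (grad θhat j - grad θstar j)) :
    (lam - zstar) * (∑ j ∈ Tᶜ, |θt j|) ≤ D + (lam - zstar) * (∑ j ∈ Tᶜ, |θt j|) ∧
    D + (lam - zstar) * (∑ j ∈ Tᶜ, |θt j|) ≤ (lam + zstar) * (∑ j ∈ T, |θt j|) := by
  have hθtv : (θt : Fin p → ℝ) = θhat - θstar := by
    funext k; simp [hθt]
  -- D as difference of fderiv applications
  have hDsplit : D = ∑ j, θt j * grad θhat j - ∑ j, θt j * grad θstar j := by
    rw [hD, ← Finset.sum_sub_distrib]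
    exact Finset.sum_congr rfl (fun j _ => by ring)
  have hfd : ∀ x : Fin p → ℝ, fderiv ℝ f x (θhat - θstar) = ∑ j, θt j * grad x j := by
    intro x
    rw [lin_sum (fderiv ℝ f x) (θhat - θstar)]
    exact Finset.sum_congr rfl (fun j _ => by simp [hgrad, hθt])
  -- D ≥ 0
  have hD0 : 0 ≤ D := by
    have h1 := grad_le f hconv hdiff θstar θhat
    have h2 := grad_le f hconv hdiff θhat θstar
    have h3 : (θstar - θhat : Fin p → ℝ) = -(θhat - θstar) := by funext k; simp
    rw [h3, map_neg] at h2
    rw [hfd] at h1 h2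
    rw [hDsplit]; linarith
  -- pointwise sup bound
  have hgb : ∀ j, |grad θstar j| ≤ zstar := by
    intro j
    rw [hz]
    exact le_ciSup (f := fun j => |grad θstar j|) (Set.Finite.bddAbove (Set.finite_range _)) j
  -- KKT facts
  have hk : ∀ j, |grad θhat j| ≤ lam ∧ grad θhat j * θhat j = -(lam * |θhat j|) := by
    intro j
    rw [hgrad]
    exact kkt f hdiff lam hlam θhat hmin j
  set A := ∑ j ∈ Tᶜ, |θt j| with hA
  set B := ∑ j ∈ T, |θt j| with hB
  have e1 : ∑ j ∈ Tᶜ, θt j * grad θhat j = -(lam * A) := by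
    rw [hA, Finset.mul_sum, ← Finset.sum_neg_distrib]
    refine Finset.sum_congr rfl (fun j hj => ?_)
    have hjT : j ∉ T := Finset.mem_compl.mp hj
    have hs0 : θstar j = 0 := by
      by_contra hc; exact hjT (hsupp j hc)
    have hθ : θt j = θhat j := by rw [hθt]; simp [hs0]
    rw [hθ, mul_comm, (hk j).2]
  have e2 : ∑ j ∈ T, θt j * grad θhat j ≤ lam * B := by
    rw [hB, Finset.mul_sum]
    refine Finset.sum_le_sum (fun j _ => ?_)
    calc θt j * grad θhat j ≤ |θt j * grad θhat j| := le_abs_self _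
      _ = |θt j| * |grad θhat j| := abs_mul _ _
      _ ≤ |θt j| * lam := mul_le_mul_of_nonneg_left (hk j).1 (abs_nonneg _)
      _ = lam * |θt j| := mul_comm _ _
  have e3 : -(∑ j, θt j * grad θstar j) ≤ zstar * B + zstar * A := by
    have : -(∑ j, θt j * grad θstar j) ≤ ∑ j, zstar * |θt j| := by
      rw [← Finset.sum_neg_distrib]
      refine Finset.sum_le_sum (fun j _ => ?_)
      calc -(θt j * grad θstar j) ≤ |θt j * grad θstar j| := neg_le_abs _
        _ = |θt j| * |grad θstar j| := abs_mul _ _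
        _ ≤ |θt j| * zstar := mul_le_mul_of_nonneg_left (hgb j) (abs_nonneg _)
        _ = zstar * |θt j| := mul_comm _ _
    have hsum : ∑ j, zstar * |θt j| = zstar * B + zstar * A := by
      rw [hB, hA, ← mul_add, Finset.sum_add_sum_compl T (fun j => |θt j|), Finset.mul_sum]
    linarith [this, hsum.le, hsum.ge]
  have esplit : ∑ j, θt j * grad θhat j
      = (∑ j ∈ T, θt j * grad θhat j) + ∑ j ∈ Tᶜ, θt j * grad θhat j :=
    (Finset.sum_add_sum_compl T _).symm
  have hDub : D ≤ lam * B - lam * A + (zstar * B + zstar * A) := by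
    rw [hDsplit, esplit, e1]
    linarith [e2, e3]
  refine ⟨by linarith, ?_⟩
  nlinarith [hDub, hD0]
end
end

section
/- For a nonnegative definite p×p matrix Σ, ξ > 1, and index set T with |T| = d₀, define the cone invertibility factor F(ξ,T,Σ) = inf{θ'Σθ/(|θ_T|₁|θ|_∞) : 0 ≠ θ ∈ C(ξ,T)}. If Σ₁, Σ₂ are nonnegative definite and |Σ₁ − Σ₂|_∞ ≤ t, then F(ξ,T,Σ₁) ≥ F(ξ,T,Σ₂) − (1+ξ)²d₀t. -/
noncomputable section

/-- The cone invertibility factor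
`F(ξ,T,Σ) = inf{θ'Σθ/(|θ_T|₁ |θ|_∞) : 0 ≠ θ, |θ_{T^c}|₁ ≤ ξ|θ_T|₁}`. -/
def coneCIF {ι : Type*} [Fintype ι] [DecidableEq ι]
    (ξ : ℝ) (T : Finset ι) (Sig : Matrix ι ι ℝ) : ℝ :=
  sInf {x | ∃ θ : ι → ℝ, θ ≠ 0 ∧ (∑ j ∈ Tᶜ, |θ j|) ≤ ξ * ∑ j ∈ T, |θ j| ∧
    x = (∑ k, ∑ l, θ k * Sig k l * θ l) / ((∑ j ∈ T, |θ j|) * (⨆ j, |θ j|))}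

lemma quad_nonneg {p : ℕ} (S : Matrix (Fin p) (Fin p) ℝ) (h : S.PosSemidef)
    (θ : Fin p → ℝ) : 0 ≤ ∑ k, ∑ l, θ k * S k l * θ l := by
  have := h.dotProduct_mulVec_nonneg θ
  simpa [dotProduct, Matrix.mulVec, Finset.mul_sum, mul_assoc] using this

lemma quad_diff {p : ℕ} (t : ℝ) (S1 S2 : Matrix (Fin p) (Fin p) ℝ)
    (hdiff : ∀ k l, |S1 k l - S2 k l| ≤ t) (θ : Fin p → ℝ) :
    (∑ k, ∑ l, θ k * S2 k l * θ l) - (∑ k, ∑ l, θ k * S1 k l * θ l)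
      ≤ t * (∑ j, |θ j|)^2 := by
  have key : ∀ k l, θ k * S2 k l * θ l - θ k * S1 k l * θ l ≤ |θ k| * t * |θ l| := by
    intro k l
    have h1 : θ k * S2 k l * θ l - θ k * S1 k l * θ l
        = θ k * (S2 k l - S1 k l) * θ l := by ring
    rw [h1]
    calc θ k * (S2 k l - S1 k l) * θ l ≤ |θ k * (S2 k l - S1 k l) * θ l| := le_abs_self _
      _ = |θ k| * |S2 k l - S1 k l| * |θ l| := by rw [abs_mul, abs_mul]
      _ ≤ |θ k| * t * |θ l| := by
          have h2 : |S2 k l - S1 k l| ≤ t := by rw [abs_sub_comm]; exact hdiff k l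
          have := mul_le_mul_of_nonneg_left h2 (abs_nonneg (θ k))
          exact mul_le_mul_of_nonneg_right this (abs_nonneg (θ l))
  calc (∑ k, ∑ l, θ k * S2 k l * θ l) - (∑ k, ∑ l, θ k * S1 k l * θ l)
      = ∑ k, ∑ l, (θ k * S2 k l * θ l - θ k * S1 k l * θ l) := by
        rw [← Finset.sum_sub_distrib]
        exact Finset.sum_congr rfl fun k _ => (Finset.sum_sub_distrib _ _).symm
    _ ≤ ∑ k, ∑ l, |θ k| * t * |θ l| :=
        Finset.sum_le_sum fun k _ => Finset.sum_le_sum fun l _ => key k l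
    _ = t * (∑ j, |θ j|)^2 := by
        simp only [← Finset.sum_mul, ← Finset.mul_sum]
        ring

/-- If `Sig1, Sig2` are nonnegative definite and `|Sig1 − Sig2|_∞ ≤ t`, then
`F(ξ,T,Sig1) ≥ F(ξ,T,Sig2) − (1+ξ)² d₀ t` where `d₀ = |T|`. -/
theorem stmt7 (p : ℕ) (ξ t : ℝ) (hξ : 1 < ξ) (ht : 0 ≤ t) (T : Finset (Fin p))
    (Sig1 Sig2 : Matrix (Fin p) (Fin p) ℝ)
    (h1 : Sig1.PosSemidef) (h2 : Sig2.PosSemidef)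
    (hdiff : ∀ k l, |Sig1 k l - Sig2 k l| ≤ t) :
    coneCIF ξ T Sig1 ≥ coneCIF ξ T Sig2 - (1 + ξ)^2 * T.card * t := by
  classical
  set c : ℝ := (1 + ξ)^2 * T.card * t with hc
  have hξ0 : (0:ℝ) ≤ 1 + ξ := by linarith
  have hc0 : 0 ≤ c := by positivity
  -- basic facts about a cone vector
  have denomfacts : ∀ θ : Fin p → ℝ, θ ≠ 0 →
      (∑ j ∈ Tᶜ, |θ j|) ≤ ξ * ∑ j ∈ T, |θ j| →
      0 < (∑ j ∈ T, |θ j|) ∧ 0 < (⨆ j, |θ j|) ∧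
        (∑ j ∈ T, |θ j|) ≤ T.card * (⨆ j, |θ j|) ∧
        (∑ j, |θ j|) ≤ (1 + ξ) * ∑ j ∈ T, |θ j| := by
    intro θ hθ hcone
    obtain ⟨j₀, hj₀⟩ := Function.ne_iff.mp hθ
    have hBdd : BddAbove (Set.range fun j => |θ j|) :=
      Set.Finite.bddAbove (Set.finite_range _)
    have hle : ∀ j, |θ j| ≤ ⨆ j, |θ j| := fun j => le_ciSup hBdd j
    have hB : 0 < ⨆ j, |θ j| := lt_of_lt_of_le (abs_pos.mpr hj₀) (hle j₀)
    have hA0 : 0 ≤ ∑ j ∈ T, |θ j| := Finset.sum_nonneg fun j _ => abs_nonneg _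
    have hA : 0 < ∑ j ∈ T, |θ j| := by
      rcases hA0.lt_or_eq with h | h
      · exact h
      · exfalso
        have hTc : ∑ j ∈ Tᶜ, |θ j| ≤ 0 := by
          have := hcone; rw [← h] at this; linarith [this]
        have hTc0 : ∑ j ∈ Tᶜ, |θ j| = 0 :=
          le_antisymm hTc (Finset.sum_nonneg fun j _ => abs_nonneg _)
        have hall : ∀ j, |θ j| = 0 := by
          intro j
          by_cases hjT : j ∈ T
          · have := Finset.sum_eq_zero_iff_of_nonneg
              (fun j _ => abs_nonneg (θ j)) |>.mp h.symm
            exact this j hjT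
          · have := Finset.sum_eq_zero_iff_of_nonneg
              (fun j _ => abs_nonneg (θ j)) |>.mp hTc0
            exact this j (Finset.mem_compl.mpr hjT)
        exact hj₀ (abs_eq_zero.mp (hall j₀))
    refine ⟨hA, hB, ?_, ?_⟩
    · have := Finset.sum_le_card_nsmul T (fun j => |θ j|) (⨆ j, |θ j|)
        (fun j _ => hle j)
      simpa [nsmul_eq_mul] using this
    · have hsplit : (∑ j, |θ j|) = (∑ j ∈ T, |θ j|) + ∑ j ∈ Tᶜ, |θ j| :=
        (Finset.sum_add_sum_compl T _).symm
      rw [hsplit]; linarith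
  by_cases hne : ∃ θ : Fin p → ℝ, θ ≠ 0 ∧ (∑ j ∈ Tᶜ, |θ j|) ≤ ξ * ∑ j ∈ T, |θ j|
  · -- both sets nonempty
    have hbdd2 : BddBelow {x | ∃ θ : Fin p → ℝ, θ ≠ 0 ∧
        (∑ j ∈ Tᶜ, |θ j|) ≤ ξ * ∑ j ∈ T, |θ j| ∧
        x = (∑ k, ∑ l, θ k * Sig2 k l * θ l) / ((∑ j ∈ T, |θ j|) * (⨆ j, |θ j|))} := by
      refine ⟨0, fun x hx => ?_⟩
      obtain ⟨θ, hθ, hcone, rfl⟩ := hx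
      obtain ⟨hA, hB, -, -⟩ := denomfacts θ hθ hcone
      exact div_nonneg (quad_nonneg Sig2 h2 θ) (le_of_lt (mul_pos hA hB))
    rw [ge_iff_le, coneCIF, coneCIF]
    obtain ⟨θ₀, hθ₀, hcone₀⟩ := hne
    refine le_csInf ⟨_, θ₀, hθ₀, hcone₀, rfl⟩ ?_
    rintro x ⟨θ, hθ, hcone, rfl⟩
    obtain ⟨hA, hB, hAcard, hsum⟩ := denomfacts θ hθ hcone
    set A := ∑ j ∈ T, |θ j| with hAdef
    set B := ⨆ j, |θ j| with hBdef
    have hAB : 0 < A * B := mul_pos hA hB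
    have hQ : (∑ k, ∑ l, θ k * Sig2 k l * θ l) - c * (A * B)
        ≤ ∑ k, ∑ l, θ k * Sig1 k l * θ l := by
      have hd := quad_diff t Sig1 Sig2 hdiff θ
      have hsq : (∑ j, |θ j|)^2 ≤ (1 + ξ)^2 * T.card * (A * B) := by
        have h1 : (∑ j, |θ j|) ≤ (1 + ξ) * A := hsum
        have h2 : (1 + ξ) * A ≤ (1 + ξ) * (T.card * B) :=
          mul_le_mul_of_nonneg_left hAcard hξ0
        have hsum0 : 0 ≤ ∑ j, |θ j| := Finset.sum_nonneg fun j _ => abs_nonneg _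
        calc (∑ j, |θ j|)^2 = (∑ j, |θ j|) * (∑ j, |θ j|) := sq _
          _ ≤ ((1 + ξ) * A) * ((1 + ξ) * (T.card * B)) :=
              mul_le_mul h1 (h1.trans h2) hsum0 (by positivity)
          _ = (1 + ξ)^2 * T.card * (A * B) := by ring
      have := mul_le_mul_of_nonneg_left hsq ht
      have hcab : t * ((1 + ξ)^2 * T.card * (A * B)) = c * (A * B) := by
        rw [hc]; ring
      nlinarith [hd, this]
    have hinf2 := csInf_le hbdd2 (a := (∑ k, ∑ l, θ k * Sig2 k l * θ l) / (A * B)) ⟨θ, hθ, hcone, rfl⟩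
    have hdiv : (∑ k, ∑ l, θ k * Sig2 k l * θ l) / (A * B) - c
        ≤ (∑ k, ∑ l, θ k * Sig1 k l * θ l) / (A * B) := by
      rw [sub_le_iff_le_add, div_add' _ _ _ (ne_of_gt hAB),
        div_le_div_iff₀ hAB hAB]
      nlinarith [hQ]
    linarith
  · -- both sets empty
    have hempty : ∀ Sig : Matrix (Fin p) (Fin p) ℝ,
        {x | ∃ θ : Fin p → ℝ, θ ≠ 0 ∧ (∑ j ∈ Tᶜ, |θ j|) ≤ ξ * ∑ j ∈ T, |θ j| ∧
          x = (∑ k, ∑ l, θ k * Sig k l * θ l) / ((∑ j ∈ T, |θ j|) * (⨆ j, |θ j|))}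
          = ∅ := by
      intro Sig
      ext x
      simp only [Set.mem_setOf_eq, Set.mem_empty_iff_false, iff_false]
      rintro ⟨θ, hθ, hcone, -⟩
      exact hne ⟨θ, hθ, hcone⟩
    rw [ge_iff_le, coneCIF, coneCIF, hempty Sig1, hempty Sig2, Real.sInf_empty]
    linarith
end
end

section
/- Let J: Y → ℝ^p be bounded with sup_y |J(y)|_∞ ≤ 1, let g(θ) be a smooth convex function whose Hessian at θ* + tθ for unit-ℓ₁ vectors θ satisfies the exponential comparison θ'(∇g(θ*+tθ) − ∇g(θ*)) ≥ t e^{-2t} θ'∇²g(θ*)θ for t ≥ 0 (as holds for the weighted log-sum-exp ℓ_n^m). If additionally for all t in an interval [0, t̃] the inequality θ'(∇g(θ*+tθ) − ∇g(θ*)) + (2λ/(ξ+1))|θ_{T^c}|₁ ≤ (2λξ/(ξ+1))|θ_T|₁ holds, where θ ∈ C(ξ,T) with |θ|₁ = 1, and F̄ = F(ξ,T,∇²g(θ*)) satisfies τ := (ξ+1)|T|λ/F̄ < e^{-1}, then t̃ ≤ η/2 where η < 1 solves η e^{-η} = τ. -/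
noncomputable section

lemma fmono : StrictMonoOn (fun x : ℝ => x * Real.exp (-x)) (Set.Icc 0 1) := by
  apply strictMonoOn_of_deriv_pos (convex_Icc 0 1)
  · fun_prop
  · intro x hx
    rw [interior_Icc] at hx
    have h1 : HasDerivAt (fun x : ℝ => x * Real.exp (-x))
        (1 * Real.exp (-x) + x * (Real.exp (-x) * (-1))) x :=
      (hasDerivAt_id x).mul ((Real.hasDerivAt_exp (-x)).comp x (hasDerivAt_neg x))
    rw [h1.deriv]
    have := Real.exp_pos (-x)
    nlinarith [hx.1, hx.2]

set_option maxHeartbeats 1000000 in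
/-- Key step of the estimation-error lemma: under the exponential Hessian comparison
and the basic cone inequality on `[0, t̃]`, if `τ = (ξ+1)|T|λ/F̄ < e⁻¹` then `t̃ ≤ η/2`
where `η < 1` solves `η e^{−η} = τ`. -/
theorem stmt9 (p : ℕ) (g : (Fin p → ℝ) → ℝ) (hg : ContDiff ℝ 2 g)
    (hconv : ConvexOn ℝ Set.univ g)
    (θstar : Fin p → ℝ) (ξ lam ttilde : ℝ) (hξ : 1 < ξ) (hlam : 0 < lam)
    (T : Finset (Fin p)) (θ : Fin p → ℝ)
    (grad : (Fin p → ℝ) → Fin p → ℝ)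
    (hgrad : ∀ x j, grad x j = fderiv ℝ g x (Pi.single j 1 : Fin p → ℝ))
    (H : Matrix (Fin p) (Fin p) ℝ)
    (hH : ∀ k l, H k l = fderiv ℝ (fun x => grad x k) θstar (Pi.single l 1 : Fin p → ℝ))
    (hcomp : ∀ v : Fin p → ℝ, (∑ j, |v j|) = 1 → ∀ t : ℝ, 0 ≤ t →
      ∑ j, v j * (grad (θstar + t • v) j - grad θstar j)
        ≥ t * Real.exp (-2 * t) * ∑ k, ∑ l, v k * H k l * v l)
    (hcone : (∑ j ∈ Tᶜ, |θ j|) ≤ ξ * ∑ j ∈ T, |θ j|)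
    (hunit : (∑ j, |θ j|) = 1)
    (httilde : 0 ≤ ttilde)
    (hineq : ∀ t ∈ Set.Icc (0 : ℝ) ttilde,
      ∑ j, θ j * (grad (θstar + t • θ) j - grad θstar j)
        + (2 * lam / (ξ + 1)) * ∑ j ∈ Tᶜ, |θ j|
        ≤ (2 * lam * ξ / (ξ + 1)) * ∑ j ∈ T, |θ j|)
    (Fbar : ℝ) (hF : Fbar = coneCIF ξ T H)
    (τ η : ℝ) (hτ : τ = (ξ + 1) * T.card * lam / Fbar) (hτe : τ < Real.exp (-1))
    (hη0 : 0 < η) (hη1 : η < 1) (hηe : η * Real.exp (-η) = τ) :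
    ttilde ≤ η / 2 := by
  by_contra hcontra
  push_neg at hcontra
  have hξ0 : (0:ℝ) < ξ + 1 := by linarith
  -- positivity of τ
  have hτ0 : 0 < τ := by
    rw [← hηe]; positivity
  -- Fbar > 0
  have hFne : Fbar ≠ 0 := by
    intro h; rw [h, div_zero] at hτ; linarith
  have hN : τ * Fbar = (ξ + 1) * T.card * lam := by
    rw [hτ]; field_simp
  have hcard0 : (0:ℝ) ≤ (T.card : ℝ) := Nat.cast_nonneg _
  have hF0 : 0 < Fbar := by
    rcases lt_trichotomy Fbar 0 with h | h | h
    · exfalso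
      have h1 := mul_neg_of_pos_of_neg hτ0 h
      nlinarith [mul_nonneg (mul_nonneg hξ0.le hcard0) hlam.le]
    · exact absurd h hFne
    · exact h
  have hs0 : (0:ℝ) < (T.card : ℝ) := by
    by_contra hc; push_neg at hc
    have hc0 : (T.card:ℝ) = 0 := le_antisymm hc hcard0
    rw [hc0] at hN
    simp only [hc0, mul_zero, zero_mul] at hN
    nlinarith [mul_pos hτ0 hF0]
  -- sums
  set ST := ∑ j ∈ T, |θ j| with hST
  set SC := ∑ j ∈ Tᶜ, |θ j| with hSC
  have hsplit : ST + SC = 1 := by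
    rw [hST, hSC, Finset.sum_add_sum_compl]; exact hunit
  have hSC0 : 0 ≤ SC := Finset.sum_nonneg fun j _ => abs_nonneg _
  have hST0 : 0 ≤ ST := Finset.sum_nonneg fun j _ => abs_nonneg _
  have hSTlb : 1 / (ξ + 1) ≤ ST := by
    rw [div_le_iff₀ hξ0]; nlinarith
  have hSTpos : 0 < ST := lt_of_lt_of_le (by positivity) hSTlb
  -- sup norm
  set M := ⨆ j, |θ j| with hM
  have hθne : θ ≠ 0 := by
    intro h
    simp [h] at hunit
  have hple : 0 < p := by
    rcases Nat.eq_zero_or_pos p with h | h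
    · exfalso; subst h; simpa [Finset.univ_eq_empty] using hunit
    · exact h
  haveI : Nonempty (Fin p) := ⟨⟨0, hple⟩⟩
  have hbdd : BddAbove (Set.range fun j => |θ j|) := Set.Finite.bddAbove (Set.finite_range _)
  have hjM : ∀ j, |θ j| ≤ M := fun j => le_ciSup hbdd j
  have hSTM : ST ≤ (T.card : ℝ) * M := by
    calc ST ≤ ∑ _j ∈ T, M := Finset.sum_le_sum fun j _ => hjM j
    _ = (T.card : ℝ) * M := by rw [Finset.sum_const, nsmul_eq_mul]
  have hMpos : 0 < M := by nlinarith
  -- quadratic form lower bound via coneCIF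
  set q := ∑ k, ∑ l, θ k * H k l * θ l with hq
  have hmem : q / (ST * M) ∈ {x | ∃ v : Fin p → ℝ, v ≠ 0 ∧
      (∑ j ∈ Tᶜ, |v j|) ≤ ξ * ∑ j ∈ T, |v j| ∧
      x = (∑ k, ∑ l, v k * H k l * v l) / ((∑ j ∈ T, |v j|) * (⨆ j, |v j|))} :=
    ⟨θ, hθne, hcone, rfl⟩
  have hFle : Fbar ≤ q / (ST * M) := by
    rw [hF, coneCIF]
    by_cases hb : BddBelow {x | ∃ v : Fin p → ℝ, v ≠ 0 ∧
      (∑ j ∈ Tᶜ, |v j|) ≤ ξ * ∑ j ∈ T, |v j| ∧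
      x = (∑ k, ∑ l, v k * H k l * v l) / ((∑ j ∈ T, |v j|) * (⨆ j, |v j|))}
    · exact csInf_le hb hmem
    · rw [Real.sInf_of_not_bddBelow hb]
      rw [hF, coneCIF] at hF0
      rw [Real.sInf_of_not_bddBelow hb] at hF0
      exact absurd hF0 (lt_irrefl _)
  have hqlb : Fbar * ST * M ≤ q := by
    have h := (le_div_iff₀ (by positivity : (0:ℝ) < ST * M)).mp hFle
    nlinarith
  -- pick t0
  set t0 := min 1 (2 * ttilde) / 2 with ht0
  have ht0mem : t0 ∈ Set.Icc (0:ℝ) ttilde := by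
    constructor
    · have : (0:ℝ) ≤ min 1 (2 * ttilde) := le_min (by norm_num) (by linarith)
      linarith
    · have : min 1 (2 * ttilde) ≤ 2 * ttilde := min_le_right _ _
      linarith
  have ht0pos : 0 < t0 := by
    have : (0:ℝ) < min 1 (2 * ttilde) := lt_min (by norm_num) (by nlinarith)
    linarith
  -- combine hcomp and hineq at t0
  have h1 := hcomp θ hunit t0 ht0pos.le
  have h2 := hineq t0 ht0mem
  set A := ∑ j, θ j * (grad (θstar + t0 • θ) j - grad θstar j) with hA
  set E := t0 * Real.exp (-2 * t0) with hE
  have hkey : E * q ≤ 2 * lam * ST - 2 * lam / (ξ + 1) := by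
    have hSCeq : SC = 1 - ST := by linarith
    have h3 : E * q + (2 * lam / (ξ + 1)) * SC ≤ (2 * lam * ξ / (ξ + 1)) * ST :=
      le_trans (by linarith [h1]) h2
    rw [hSCeq] at h3
    have e1 : (2 * lam / (ξ + 1)) * (1 - ST) = 2 * lam / (ξ+1) - (2*lam/(ξ+1)) * ST := by ring
    have e0 : 2 * lam * ξ / (ξ + 1) + 2 * lam / (ξ + 1) = 2 * lam := by
      rw [← add_div, div_eq_iff hξ0.ne']; ring
    have e2 : (2 * lam * ξ / (ξ + 1)) * ST + (2*lam/(ξ+1)) * ST = 2 * lam * ST := by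
      calc (2 * lam * ξ / (ξ + 1)) * ST + (2*lam/(ξ+1)) * ST
          = (2 * lam * ξ / (ξ + 1) + 2 * lam / (ξ + 1)) * ST := by ring
        _ = 2 * lam * ST := by rw [e0]
    linarith [h3, e1, e2]
  -- algebra: RHS ≤ λ(ξ+1)ST²/2
  have halg : 2 * lam * ST - 2 * lam / (ξ + 1) ≤ lam * (ξ + 1) * ST ^ 2 / 2 := by
    have e3 : lam * ((ξ+1) * (ξ+1)⁻¹) * ST = lam * ST := by
      rw [mul_inv_cancel₀ hξ0.ne']; ring
    have e4 : lam * ((ξ+1) * (ξ+1)⁻¹) * (ξ+1)⁻¹ = lam * (ξ+1)⁻¹ := by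
      rw [mul_inv_cancel₀ hξ0.ne']; ring
    have hsq : 0 ≤ lam * (ξ+1) * (ST - 2*(ξ+1)⁻¹)^2 := by positivity
    rw [div_eq_mul_inv (2*lam), div_eq_mul_inv (lam*(ξ+1)*ST^2)]
    nlinarith [e3, e4, hsq]
  -- q lower bound: Fbar * ST^2 / card ≤ q
  have hq2 : Fbar * ST ^ 2 / (T.card : ℝ) ≤ q := by
    rw [div_le_iff₀ hs0]
    calc Fbar * ST ^ 2 = Fbar * ST * ST := by ring
      _ ≤ Fbar * ST * ((T.card : ℝ) * M) :=
          mul_le_mul_of_nonneg_left hSTM (by positivity)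
      _ = (Fbar * ST * M) * (T.card : ℝ) := by ring
      _ ≤ q * (T.card : ℝ) := mul_le_mul_of_nonneg_right hqlb hcard0
  -- conclude t0 e^{-2t0} ≤ τ/2
  have hexp0 : 0 < Real.exp (-2 * t0) := Real.exp_pos _
  have hE0 : 0 ≤ E := by rw [hE]; positivity
  have hfin : E ≤ τ / 2 := by
    have hc1 : E * (Fbar * ST^2 / (T.card:ℝ)) ≤ lam * (ξ+1) * ST^2/2 := by
      calc E * (Fbar * ST^2 / (T.card:ℝ))
          ≤ E * q := mul_le_mul_of_nonneg_left hq2 hE0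
        _ ≤ 2 * lam * ST - 2 * lam / (ξ + 1) := hkey
        _ ≤ lam * (ξ + 1) * ST ^ 2 / 2 := halg
    -- divide by Fbar * ST^2 / card > 0
    have hd : (0:ℝ) < Fbar * ST^2 / (T.card:ℝ) := by positivity
    have hτ2 : τ / 2 = lam * (ξ+1) * ST^2/2 / (Fbar * ST^2 / (T.card:ℝ)) := by
      rw [hτ]; field_simp
    rw [hτ2, le_div_iff₀ hd]
    linarith
  -- contradiction
  set u := min 1 (2 * ttilde) with hu
  have hut : u = 2 * t0 := by rw [ht0]; ring
  have huu : u * Real.exp (-u) ≤ τ := by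
    rw [hut]
    have : (-(2*t0)) = -2 * t0 := by ring
    rw [this]
    calc 2 * t0 * Real.exp (-2 * t0) = 2 * E := by rw [hE]; ring
    _ ≤ 2 * (τ / 2) := by linarith
    _ = τ := by ring
  rcases le_or_gt 1 (2 * ttilde) with h | h
  · have hu1 : u = 1 := min_eq_left h
    rw [hu1] at huu
    simp at huu
    linarith
  · have hu1 : u = 2 * ttilde := min_eq_right h.le
    have huη : η < u := by rw [hu1]; linarith
    have := fmono (Set.mem_Icc.mpr ⟨hη0.le, hη1.le⟩)
      (Set.mem_Icc.mpr ⟨by rw [hu1]; linarith, by rw [hu1]; linarith⟩) huη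
    simp only at this
    rw [hηe] at this
    linarith
end
end

section
/- For the log-sum-exp type function g(θ) = log((1/m)Σ_{k=1}^m exp(θ'v_k)/c_k) with c_k > 0 and vectors v_k ∈ ℝ^p, and any unit-ℓ₁-norm direction θ with max_k |θ'v_k| ≤ 1, one has for all t ≥ 0: θ'(∇g(θ* + tθ) − ∇g(θ*)) ≥ t e^{-2t} θ'∇²g(θ*)θ. -/
open Real Finset

noncomputable section

lemma gfderiv (p m : ℕ) [NeZero m] (v : Fin m → Fin p → ℝ) (c : Fin m → ℝ)
    (hc : ∀ k, 0 < c k) (x d : Fin p → ℝ) :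
    fderiv ℝ (fun x : Fin p → ℝ => Real.log ((1 / m : ℝ) * ∑ k, Real.exp (∑ j, x j * v k j) / c k)) x d
      = (∑ k, (Real.exp (∑ j, x j * v k j) / c k) * (∑ j, d j * v k j))
          / (∑ k, Real.exp (∑ j, x j * v k j) / c k) := by
  classical
  set L : Fin m → (Fin p → ℝ) →L[ℝ] ℝ :=
    fun k => ∑ j, (v k j) • (ContinuousLinearMap.proj j : (Fin p → ℝ) →L[ℝ] ℝ) with hL
  have hLapp : ∀ k (y : Fin p → ℝ), L k y = ∑ j, y j * v k j := by
    intro k y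
    simp [hL, ContinuousLinearMap.sum_apply, mul_comm]
  have hlin : ∀ k, HasFDerivAt (fun y : Fin p → ℝ => ∑ j, y j * v k j) (L k) x := by
    intro k
    have := (L k).hasFDerivAt (x := x)
    convert this using 1
    ext y; rw [hLapp]
  have hterm : ∀ k, HasFDerivAt (fun y : Fin p → ℝ => Real.exp (∑ j, y j * v k j) / c k)
      ((Real.exp (∑ j, x j * v k j) / c k) • L k) x := by
    intro k
    have h1 := ((hlin k).exp).const_mul ((c k)⁻¹)
    have h2 : (fun y : Fin p → ℝ => (c k)⁻¹ * Real.exp (∑ j, y j * v k j))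
        = fun y : Fin p → ℝ => Real.exp (∑ j, y j * v k j) / c k := by
      ext y; rw [div_eq_inv_mul]
    rw [h2] at h1
    rw [smul_smul, ← div_eq_inv_mul] at h1
    exact h1
  have hS : HasFDerivAt (fun y : Fin p → ℝ => (1 / m : ℝ) * ∑ k, Real.exp (∑ j, y j * v k j) / c k)
      ((1 / m : ℝ) • ∑ k, (Real.exp (∑ j, x j * v k j) / c k) • L k) x :=
    (HasFDerivAt.fun_sum (fun k _ => hterm k)).const_mul _
  have hSpos : 0 < ∑ k, Real.exp (∑ j, x j * v k j) / c k :=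
    Finset.sum_pos (fun k _ => div_pos (Real.exp_pos _) (hc k)) univ_nonempty
  have hmpos : (0:ℝ) < (m:ℝ) := by exact_mod_cast Nat.pos_of_ne_zero (NeZero.ne m)
  have hval : (1 / m : ℝ) * ∑ k, Real.exp (∑ j, x j * v k j) / c k ≠ 0 := by positivity
  have hg := hS.log hval
  have key : (∑ k, (Real.exp (∑ j, x j * v k j) / c k) • L k) d
      = ∑ k, (Real.exp (∑ j, x j * v k j) / c k) * (∑ j, d j * v k j) := by
    rw [ContinuousLinearMap.sum_apply]
    exact Finset.sum_congr rfl fun k _ => by rw [ContinuousLinearMap.smul_apply, hLapp, smul_eq_mul]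
  rw [hg.fderiv]
  rw [ContinuousLinearMap.smul_apply, ContinuousLinearMap.smul_apply, key, smul_eq_mul, smul_eq_mul]
  field_simp

set_option maxHeartbeats 1600000 in
/-- Exponential Hessian comparison for log-sum-exp: for
`g(θ) = log((1/m) Σ_k exp(θ'v_k)/c_k)` and any unit-ℓ₁ direction `θ` with
`max_k |θ'v_k| ≤ 1`, for all `t ≥ 0`,
`θ'(∇g(θ*+tθ) − ∇g(θ*)) ≥ t e^{−2t} θ'∇²g(θ*)θ`, where `∇²g(θ*)` is the weighted
covariance matrix with weights `w_k(θ*) = exp(θ*'v_k)/c_k`. -/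
theorem stmt17 (p m : ℕ) [NeZero m] (v : Fin m → Fin p → ℝ) (c : Fin m → ℝ)
    (hc : ∀ k, 0 < c k) (θstar θ : Fin p → ℝ)
    (hunit : (∑ j, |θ j|) = 1) (hbdd : ∀ k, |∑ j, θ j * v k j| ≤ 1)
    (g : (Fin p → ℝ) → ℝ)
    (hg : g = fun x => Real.log ((1 / m : ℝ) * ∑ k, Real.exp (∑ j, x j * v k j) / c k))
    (w : Fin m → ℝ) (hw : ∀ k, w k = Real.exp (∑ j, θstar j * v k j) / c k)
    (t : ℝ) (ht : 0 ≤ t) :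
    ∑ j, θ j * (fderiv ℝ g (θstar + t • θ) (Pi.single j 1 : Fin p → ℝ)
        - fderiv ℝ g θstar (Pi.single j 1 : Fin p → ℝ))
      ≥ t * Real.exp (-2 * t) *
        ((∑ k, w k * (∑ j, θ j * v k j) ^ 2) / (∑ k, w k)
          - ((∑ k, w k * (∑ j, θ j * v k j)) / (∑ k, w k)) ^ 2) := by
  classical
  subst hg
  set u : Fin m → ℝ := fun k => ∑ j, θ j * v k j with hu_def
  have hbdd' : ∀ k, |u k| ≤ 1 := fun k => hbdd k
  have hwpos : ∀ k, 0 < w k := fun k => by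
    rw [hw]; exact div_pos (Real.exp_pos _) (hc k)
  set W : ℝ := ∑ k, w k with hW_def
  have hWpos : 0 < W := Finset.sum_pos (fun k _ => hwpos k) univ_nonempty
  set A : ℝ → ℝ := fun s => ∑ k, w k * Real.exp (s * u k) with hA_def
  set B : ℝ → ℝ := fun s => ∑ k, w k * Real.exp (s * u k) * u k with hB_def
  set C : ℝ → ℝ := fun s => ∑ k, w k * Real.exp (s * u k) * u k ^ 2 with hC_def
  have hApos : ∀ s, 0 < A s := fun s =>
    Finset.sum_pos (fun k _ => mul_pos (hwpos k) (Real.exp_pos _)) univ_nonempty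
  set f : ℝ → ℝ := fun s => B s / A s with hf_def
  -- derivatives
  have htermA : ∀ (k : Fin m) (s : ℝ),
      HasDerivAt (fun s => w k * Real.exp (s * u k)) (w k * Real.exp (s * u k) * u k) s := by
    intro k s
    have h1 : HasDerivAt (fun s : ℝ => s * u k) (u k) s := hasDerivAt_mul_const _
    have h2 := (h1.exp).const_mul (w k)
    exact h2.congr_deriv (by ring)
  have hA' : ∀ s, HasDerivAt A (B s) s := fun s =>
    HasDerivAt.fun_sum (fun k _ => htermA k s)
  have hB' : ∀ s, HasDerivAt B (C s) s := by
    intro s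
    have h : ∀ k : Fin m, k ∈ univ → HasDerivAt (fun s => w k * Real.exp (s * u k) * u k)
        (w k * Real.exp (s * u k) * u k ^ 2) s := by
      intro k _
      have := (htermA k s).mul_const (u k)
      exact this.congr_deriv (by ring)
    exact HasDerivAt.fun_sum h
  have hf' : ∀ s, HasDerivAt f ((C s * A s - B s * B s) / (A s) ^ 2) s := fun s =>
    (hB' s).div (hA' s) (hApos s).ne'
  -- variance expansion tool
  have expand : ∀ (a : Fin m → ℝ) (x : ℝ),
      ∑ k, a k * (u k - x) ^ 2
        = (∑ k, a k * u k ^ 2) - 2 * x * (∑ k, a k * u k) + x ^ 2 * (∑ k, a k) := by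
    intro a x
    have h : ∀ k : Fin m, a k * (u k - x) ^ 2
        = a k * u k ^ 2 - 2 * x * (a k * u k) + x ^ 2 * a k := fun k => by ring
    rw [Finset.sum_congr rfl fun k _ => h k, Finset.sum_add_distrib, Finset.sum_sub_distrib,
      ← Finset.mul_sum, ← Finset.mul_sum]
  set V : ℝ := (∑ k, w k * u k ^ 2) / W - ((∑ k, w k * u k) / W) ^ 2 with hV_def
  set μ : ℝ := (∑ k, w k * u k) / W with hμ_def
  have e4 : ∑ k, w k * (u k - μ) ^ 2 = V * W := by
    rw [expand, hV_def, hμ_def]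
    field_simp
    ring
  have hVnonneg : 0 ≤ V := by
    have h0 : 0 ≤ ∑ k, w k * (u k - μ) ^ 2 :=
      Finset.sum_nonneg fun k _ => mul_nonneg (hwpos k).le (sq_nonneg _)
    rw [e4] at h0
    nlinarith
  set K : ℝ := Real.exp (-2 * t) * V with hK_def
  have hKnonneg : 0 ≤ K := mul_nonneg (Real.exp_nonneg _) hVnonneg
  -- key inequality
  have hkey : ∀ s, 0 ≤ s → s ≤ t → K * (A s) ^ 2 ≤ C s * A s - B s * B s := by
    intro s hs0 hst
    have hAs := hApos s
    set μ' : ℝ := B s / A s with hμ'_def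
    have e1 : C s * A s - B s * B s
        = A s * ∑ k, (w k * Real.exp (s * u k)) * (u k - μ') ^ 2 := by
      rw [expand]
      have h1 : (∑ k, w k * Real.exp (s * u k) * u k ^ 2) = C s := rfl
      have h2 : (∑ k, w k * Real.exp (s * u k) * u k) = B s := rfl
      have h3 : (∑ k, w k * Real.exp (s * u k)) = A s := rfl
      rw [h1, h2, h3, hμ'_def]
      field_simp
      ring
    have hexlow : ∀ k : Fin m, Real.exp (-s) ≤ Real.exp (s * u k) := by
      intro k
      apply Real.exp_le_exp.mpr
      have h := abs_le.mp (hbdd' k)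
      nlinarith [mul_nonneg hs0 (by linarith [h.1] : (0:ℝ) ≤ u k + 1)]
    have hexhigh : ∀ k : Fin m, Real.exp (s * u k) ≤ Real.exp s := by
      intro k
      apply Real.exp_le_exp.mpr
      have h := abs_le.mp (hbdd' k)
      nlinarith [mul_nonneg hs0 (by linarith [h.2] : (0:ℝ) ≤ 1 - u k)]
    have e2 : Real.exp (-s) * ∑ k, w k * (u k - μ') ^ 2
        ≤ ∑ k, (w k * Real.exp (s * u k)) * (u k - μ') ^ 2 := by
      rw [Finset.mul_sum]
      apply Finset.sum_le_sum
      intro k _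
      have hnn : (0:ℝ) ≤ w k * (u k - μ') ^ 2 := mul_nonneg (hwpos k).le (sq_nonneg _)
      have := mul_le_mul_of_nonneg_right (hexlow k) hnn
      nlinarith
    have e3 : ∑ k, w k * (u k - μ) ^ 2 ≤ ∑ k, w k * (u k - μ') ^ 2 := by
      have hdiff : ∑ k, w k * (u k - μ') ^ 2 - ∑ k, w k * (u k - μ) ^ 2
          = W * (μ' - μ) ^ 2 := by
        rw [expand, expand, hμ_def]
        field_simp
        ring
      nlinarith [sq_nonneg (μ' - μ)]
    have e5 : A s ≤ Real.exp s * W := by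
      rw [hW_def, hA_def]
      simp only
      rw [Finset.mul_sum]
      apply Finset.sum_le_sum
      intro k _
      have := mul_le_mul_of_nonneg_left (hexhigh k) (hwpos k).le
      nlinarith
    have hexp1 : Real.exp (-2 * t) * Real.exp s ≤ Real.exp (-s) := by
      rw [← Real.exp_add]
      apply Real.exp_le_exp.mpr
      linarith
    have hSmain : V * W ≤ ∑ k, w k * (u k - μ') ^ 2 := by rw [← e4]; exact e3
    calc K * A s ^ 2
        ≤ K * (A s * (Real.exp s * W)) := by
          apply mul_le_mul_of_nonneg_left _ hKnonneg
          nlinarith [mul_le_mul_of_nonneg_left e5 hAs.le]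
      _ = (Real.exp (-2 * t) * Real.exp s) * (V * (A s * W)) := by rw [hK_def]; ring
      _ ≤ Real.exp (-s) * (V * (A s * W)) := by
          apply mul_le_mul_of_nonneg_right hexp1
          exact mul_nonneg hVnonneg (mul_pos hAs hWpos).le
      _ = A s * (Real.exp (-s) * (V * W)) := by ring
      _ ≤ A s * (Real.exp (-s) * ∑ k, w k * (u k - μ') ^ 2) := by
          apply mul_le_mul_of_nonneg_left _ hAs.le
          exact mul_le_mul_of_nonneg_left hSmain (Real.exp_nonneg _)
      _ ≤ A s * ∑ k, (w k * Real.exp (s * u k)) * (u k - μ') ^ 2 :=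
          mul_le_mul_of_nonneg_left e2 hAs.le
      _ = C s * A s - B s * B s := e1.symm
  -- monotonicity
  set h : ℝ → ℝ := fun s => f s - s * K with hh_def
  have hh' : ∀ s, HasDerivAt h ((C s * A s - B s * B s) / (A s) ^ 2 - K) s := fun s =>
    (hf' s).sub (hasDerivAt_mul_const K)
  have hmono : MonotoneOn h (Set.Icc 0 t) := by
    apply monotoneOn_of_deriv_nonneg (convex_Icc 0 t)
    · exact fun x _ => ((hh' x).continuousAt).continuousWithinAt
    · intro x hx
      exact ((hh' x).differentiableAt).differentiableWithinAt
    · intro x hx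
      rw [interior_Icc] at hx
      rw [(hh' x).deriv]
      have hk := hkey x hx.1.le hx.2.le
      have hAx := hApos x
      rw [sub_nonneg, le_div_iff₀ (by positivity)]
      linarith
  have hft : h 0 ≤ h t := hmono ⟨le_refl _, ht⟩ ⟨ht, le_refl _⟩ ht
  have hft2 : f 0 - 0 * K ≤ f t - t * K := hft
  -- translate the goal
  have hsum : ∀ (D : (Fin p → ℝ) →L[ℝ] ℝ), (∑ j, θ j * D (Pi.single j 1)) = D θ := by
    intro D
    have h1 : θ = ∑ j, Pi.single j (θ j) := (Finset.univ_sum_single θ).symm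
    conv_rhs => rw [h1]
    rw [map_sum]
    apply Finset.sum_congr rfl
    intro j _
    have h2 : (Pi.single j (θ j) : Fin p → ℝ) = θ j • (Pi.single j 1 : Fin p → ℝ) := by
      ext l
      by_cases hl : l = j <;> simp [Pi.single_apply, hl]
    rw [h2, map_smul, smul_eq_mul]
  have hWx : ∀ (s : ℝ) (k : Fin m),
      Real.exp (∑ j, (θstar + s • θ) j * v k j) / c k
        = w k * Real.exp (s * ∑ j, θ j * v k j) := by
    intro s k
    rw [hw]
    have hsum2 : ∑ j, (θstar + s • θ) j * v k j
        = (∑ j, θstar j * v k j) + s * (∑ j, θ j * v k j) := by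
      rw [Finset.mul_sum, ← Finset.sum_add_distrib]
      apply Finset.sum_congr rfl
      intro j _
      simp only [Pi.add_apply, Pi.smul_apply, smul_eq_mul]
      ring
    rw [hsum2, Real.exp_add]
    ring
  have hval1 : fderiv ℝ (fun x : Fin p → ℝ =>
      Real.log ((1 / m : ℝ) * ∑ k, Real.exp (∑ j, x j * v k j) / c k)) (θstar + t • θ) θ
      = B t / A t := by
    rw [gfderiv p m v c hc]
    simp only [hB_def, hA_def, hu_def]
    congr 1
    · exact Finset.sum_congr rfl fun k _ => by rw [hWx t k]
    · exact Finset.sum_congr rfl fun k _ => by rw [hWx t k]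
  have hval0 : fderiv ℝ (fun x : Fin p → ℝ =>
      Real.log ((1 / m : ℝ) * ∑ k, Real.exp (∑ j, x j * v k j) / c k)) θstar θ
      = B 0 / A 0 := by
    rw [gfderiv p m v c hc]
    simp only [hB_def, hA_def, hu_def]
    congr 1
    · apply Finset.sum_congr rfl
      intro k _
      rw [hw k]
      simp
    · apply Finset.sum_congr rfl
      intro k _
      rw [hw k]
      simp
  have hgoal_lhs : ∑ j, θ j * (fderiv ℝ (fun x : Fin p → ℝ =>
        Real.log ((1 / m : ℝ) * ∑ k, Real.exp (∑ j, x j * v k j) / c k)) (θstar + t • θ) (Pi.single j 1)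
      - fderiv ℝ (fun x : Fin p → ℝ =>
        Real.log ((1 / m : ℝ) * ∑ k, Real.exp (∑ j, x j * v k j) / c k)) θstar (Pi.single j 1))
      = f t - f 0 := by
    have e : ∀ j : Fin p, θ j * (fderiv ℝ (fun x : Fin p → ℝ =>
        Real.log ((1 / m : ℝ) * ∑ k, Real.exp (∑ j, x j * v k j) / c k)) (θstar + t • θ) (Pi.single j 1)
      - fderiv ℝ (fun x : Fin p → ℝ =>
        Real.log ((1 / m : ℝ) * ∑ k, Real.exp (∑ j, x j * v k j) / c k)) θstar (Pi.single j 1))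
        = θ j * fderiv ℝ (fun x : Fin p → ℝ =>
        Real.log ((1 / m : ℝ) * ∑ k, Real.exp (∑ j, x j * v k j) / c k)) (θstar + t • θ) (Pi.single j 1)
      - θ j * fderiv ℝ (fun x : Fin p → ℝ =>
        Real.log ((1 / m : ℝ) * ∑ k, Real.exp (∑ j, x j * v k j) / c k)) θstar (Pi.single j 1) :=
      fun j => mul_sub _ _ _
    rw [Finset.sum_congr rfl fun j _ => e j, Finset.sum_sub_distrib, hsum, hsum, hval1, hval0,
      hf_def]
  rw [hgoal_lhs, ge_iff_le]
  have hgoalr : (∑ k, w k * (∑ j, θ j * v k j) ^ 2) / W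
      - ((∑ k, w k * (∑ j, θ j * v k j)) / W) ^ 2 = V := by
    rw [hV_def]
  calc t * Real.exp (-2 * t) * ((∑ k, w k * (∑ j, θ j * v k j) ^ 2) / W
        - ((∑ k, w k * (∑ j, θ j * v k j)) / W) ^ 2)
      = t * K := by rw [hgoalr, hK_def]; ring
    _ ≤ f t - f 0 := by linarith
end
end
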